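/- Let β,γ ∈ (0,1) with β ≠ γ, and let λ = (1−β)/(1−γ). Let T be the graph on vertices {ρ,a,b,c} with edges {ρ,a},{a,b},{a,c},{b,c} (a triangle a,b,c with a pendant root ρ attached to a). Then the effective field R of T equals (1 + γλr)/(β + λr) where r = (β + 2λγ + λ²γ³)/(β³ + 2λβ + λ²γ), and it satisfies R ≠ 1 and γ < R < 1/β. -/

import Mathlib

open Finset

attribute [local instance] Classical.propDecidable

noncomputable section

/-- The number of vertices with spin 1 (`true`) in the configuration `σ`. -/
def confOnes {V : Type*} [Fintype V] (σ : V → Bool) : ℕ :=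
  (Finset.univ.filter fun v => σ v = true).card

/-- The number of edges of `G` whose two endpoints both receive spin `b` under `σ`. -/
def monoCount {V : Type*} [Fintype V] [DecidableEq V] (G : SimpleGraph V) (b : Bool)
    (σ : V → Bool) : ℕ :=
  (G.edgeFinset.filter fun e => ∀ v ∈ e, σ v = b).card

/-- The Gibbs weight `λ^{|σ|} β^{m₀(σ)} γ^{m₁(σ)}` of a configuration `σ`
(with the convention `0^0 = 1`, which holds for `Monoid.npow`). -/
def gWeight {V : Type*} [Fintype V] [DecidableEq V] (G : SimpleGraph V) (β γ lam : ℝ)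
    (σ : V → Bool) : ℝ :=
  lam ^ confOnes σ * β ^ monoCount G false σ * γ ^ monoCount G true σ

/-- The total Gibbs weight of configurations assigning spin `b` to the root `ρ`. -/
def Zcond {V : Type*} [Fintype V] [DecidableEq V] (G : SimpleGraph V) (β γ lam : ℝ)
    (ρ : V) (b : Bool) : ℝ :=
  ∑ σ : V → Bool, if σ ρ = b then gWeight G β γ lam σ else 0

/-- The effective field `(1/λ)·μ(σ(ρ)=1)/μ(σ(ρ)=0)` of the rooted graph `(G, ρ)`;
since `μ` assigns probabilities proportional to the Gibbs weights, this ratio of conditional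
probabilities equals the corresponding ratio of total weights. -/
def effField {V : Type*} [Fintype V] [DecidableEq V] (G : SimpleGraph V) (β γ lam : ℝ)
    (ρ : V) : ℝ :=
  Zcond G β γ lam ρ true / (lam * Zcond G β γ lam ρ false)

/-- The conditional expectation `E_{σ∼μ}[|σ| | σ(ρ) = b]`, expressed via Gibbs weights. -/
def condMag {V : Type*} [Fintype V] [DecidableEq V] (G : SimpleGraph V) (β γ lam : ℝ)
    (ρ : V) (b : Bool) : ℝ :=
  (∑ σ : V → Bool, if σ ρ = b then (confOnes σ : ℝ) * gWeight G β γ lam σ else 0) /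
    Zcond G β γ lam ρ b

/-- The magnetization gap `E[|σ| | σ(ρ)=1] − E[|σ| | σ(ρ)=0]` of the rooted graph `(G, ρ)`. -/
def magGap {V : Type*} [Fintype V] [DecidableEq V] (G : SimpleGraph V) (β γ lam : ℝ)
    (ρ : V) : ℝ :=
  condMag G β γ lam ρ true - condMag G β γ lam ρ false

/-- `(β, γ)` is antiferromagnetic: both are nonnegative, `βγ < 1`, and not both are zero. -/
def Antiferro (β γ : ℝ) : Prop :=
  0 ≤ β ∧ 0 ≤ γ ∧ β * γ < 1 ∧ (β ≠ 0 ∨ γ ≠ 0)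

/-- The graph on vertices `{ρ,a,b,c} = {0,1,2,3}` consisting of the triangle `a,b,c`
with a pendant root `ρ` attached to `a`. -/
def pendantTriangle : SimpleGraph (Fin 4) :=
  SimpleGraph.fromEdgeSet {s(0, 1), s(1, 2), s(1, 3), s(2, 3)}


lemma pt_edge : pendantTriangle.edgeFinset
    = ({s(0,1), s(1,2), s(1,3), s(2,3)} : Finset (Sym2 (Fin 4))) := by
  ext e
  induction e using Sym2.ind with
  | _ x y =>
    rw [SimpleGraph.mem_edgeFinset]
    simp only [SimpleGraph.mem_edgeFinset, SimpleGraph.mem_edgeSet, pendantTriangle,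
      SimpleGraph.fromEdgeSet_adj, Set.mem_insert_iff, Set.mem_singleton_iff,
      Finset.mem_insert, Finset.mem_singleton]
    revert x y
    decide

lemma confOnes4 (σ : Fin 4 → Bool) : confOnes σ =
    (if σ 0 = true then 1 else 0) + (if σ 1 = true then 1 else 0)
      + (if σ 2 = true then 1 else 0) + (if σ 3 = true then 1 else 0) := by
  rw [confOnes, Finset.card_filter, Fin.sum_univ_four]

lemma monoCount4 (b : Bool) (σ : Fin 4 → Bool) : monoCount pendantTriangle b σ =
    (if σ 0 = b ∧ σ 1 = b then 1 else 0) + (if σ 1 = b ∧ σ 2 = b then 1 else 0)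
      + (if σ 1 = b ∧ σ 3 = b then 1 else 0) + (if σ 2 = b ∧ σ 3 = b then 1 else 0) := by
  rw [monoCount, pt_edge, Finset.card_filter]
  rw [show ({s(0,1), s(1,2), s(1,3), s(2,3)} : Finset (Sym2 (Fin 4)))
      = insert s(0,1) (insert s(1,2) (insert s(1,3) {s(2,3)})) from rfl]
  rw [Finset.sum_insert (by decide), Finset.sum_insert (by decide),
    Finset.sum_insert (by decide), Finset.sum_singleton]
  simp only [Sym2.ball]
  ring

def e4 : (Bool × Bool × Bool × Bool) ≃ (Fin 4 → Bool) where
  toFun p := ![p.1, p.2.1, p.2.2.1, p.2.2.2]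
  invFun σ := (σ 0, σ 1, σ 2, σ 3)
  left_inv p := rfl
  right_inv σ := by funext i; fin_cases i <;> rfl

lemma Zcond_eval (β γ lam : ℝ) (b : Bool) :
    Zcond pendantTriangle β γ lam 0 b =
      ∑ p : Bool × Bool × Bool × Bool,
        (if p.1 = b then gWeight pendantTriangle β γ lam ![p.1, p.2.1, p.2.2.1, p.2.2.2]
          else 0) := by
  rw [Zcond, ← Equiv.sum_comp e4]
  rfl

lemma Z0eval (β γ lam : ℝ) : Zcond pendantTriangle β γ lam 0 false =
    β * (β^3 + 2*lam*β + lam^2*γ) + lam * (β + 2*lam*γ + lam^2*γ^3) := by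
  rw [Zcond_eval]
  simp only [Fintype.sum_prod_type, Fintype.sum_bool, gWeight, confOnes4, monoCount4,
    Matrix.cons_val_zero, Matrix.cons_val_one, Matrix.head_cons, Matrix.cons_val_two,
    Matrix.cons_val_three, Matrix.tail_cons, Matrix.head_fin_const]
  norm_num
  ring

lemma Z1eval (β γ lam : ℝ) : Zcond pendantTriangle β γ lam 0 true =
    lam * ((β^3 + 2*lam*β + lam^2*γ) + lam * γ * (β + 2*lam*γ + lam^2*γ^3)) := by
  rw [Zcond_eval]
  simp only [Fintype.sum_prod_type, Fintype.sum_bool, gWeight, confOnes4, monoCount4,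
    Matrix.cons_val_zero, Matrix.cons_val_one, Matrix.head_cons, Matrix.cons_val_two,
    Matrix.cons_val_three, Matrix.tail_cons, Matrix.head_fin_const]
  norm_num
  ring

/-- Let `β,γ ∈ (0,1)` with `β ≠ γ`, and let `λ = (1−β)/(1−γ)`.  For the
triangle with a pendant root, the effective field `R` equals `(1 + γλr)/(β + λr)` with
`r = (β + 2λγ + λ²γ³)/(β³ + 2λβ + λ²γ)`, and it satisfies `R ≠ 1` and `γ < R < 1/β`. -/
theorem pendantTriangle_effField (β γ lam r : ℝ) (hβ0 : 0 < β) (hβ1 : β < 1) (hγ0 : 0 < γ)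
    (hγ1 : γ < 1) (hβγ : β ≠ γ) (hlam : lam = (1 - β) / (1 - γ))
    (hr : r = (β + 2 * lam * γ + lam ^ 2 * γ ^ 3) / (β ^ 3 + 2 * lam * β + lam ^ 2 * γ)) :
    effField pendantTriangle β γ lam 0 = (1 + γ * lam * r) / (β + lam * r) ∧
    effField pendantTriangle β γ lam 0 ≠ 1 ∧
    γ < effField pendantTriangle β γ lam 0 ∧
    effField pendantTriangle β γ lam 0 < 1 / β := by
  have hγ1' : (0:ℝ) < 1 - γ := by linarith
  have hβ1' : (0:ℝ) < 1 - β := by linarith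
  have hlam0 : 0 < lam := by rw [hlam]; positivity
  set Dv : ℝ := β^3 + 2*lam*β + lam^2*γ with hDv
  set Nv : ℝ := β + 2*lam*γ + lam^2*γ^3 with hNv
  have hD : 0 < Dv := by positivity
  have hN : 0 < Nv := by positivity
  have hden : 0 < β * Dv + lam * Nv := by positivity
  have hnum : 0 < Dv + lam * γ * Nv := by positivity
  have hDN : Dv - Nv = (1-β)^2*(β-γ) := by
    have h1 : (1:ℝ) - γ ≠ 0 := by linarith
    rw [hDv, hNv, hlam]
    field_simp
    ring
  have hDNne : Dv - Nv ≠ 0 := by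
    rw [hDN]
    have : β - γ ≠ 0 := sub_ne_zero.mpr hβγ
    positivity
  have hR : effField pendantTriangle β γ lam 0 = (Dv + lam * γ * Nv) / (β * Dv + lam * Nv) := by
    rw [effField, Z0eval, Z1eval, ← hDv, ← hNv]
    rw [mul_div_mul_left _ _ (ne_of_gt hlam0)]
  have hβγ1 : β * γ < 1 := by nlinarith
  refine ⟨?_, ?_, ?_, ?_⟩
  · rw [hR, hr]
    rw [div_eq_div_iff (ne_of_gt hden) ?h2]
    · field_simp
    · have : 0 < β + lam * (Nv / Dv) := by positivity
      exact ne_of_gt this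
  · rw [hR]
    intro h
    rw [div_eq_one_iff_eq (ne_of_gt hden)] at h
    have hlg : lam * (1 - γ) = 1 - β := by
      rw [hlam]; field_simp
    have : (1 - β) * (Dv - Nv) = 0 := by nlinarith [h, hlg]
    have := mul_eq_zero.mp this
    rcases this with h' | h'
    · linarith
    · exact hDNne h'
  · rw [hR, lt_div_iff₀ hden]
    nlinarith [mul_pos hD (show (0:ℝ) < 1 - γ*β by nlinarith)]
  · rw [hR, div_lt_div_iff₀ hden hβ0]
    nlinarith [mul_pos (mul_pos hlam0 hN) (show (0:ℝ) < 1 - β*γ by nlinarith)]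


end
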